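/- If a hypergraph H has h-LLY–Ricci curvature at least some positive constant κ between all adjacent vertices, and if h'(1) = 0 is allowed, then in fact inf_{x,y} κ̃(h;x,y) ≤ 0 whenever h'(1) = 0 and diam(H) ≥ 2; in particular, a positive uniform lower curvature bound is impossible when h'(1) = 0 and diam(H) ≥ 2. -/

import Mathlib

open Filter Set Classical

noncomputable section

/-- A hypergraph: a vertex type together with a family of hyperedges. -/
structure HGraph (V : Type*) where
  E : Set (Set V)

namespace HGraph

variable {V : Type*}

/-- Two distinct vertices are adjacent if some hyperedge contains both. -/
def Adj (H : HGraph V) (x y : V) : Prop :=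
  x ≠ y ∧ ∃ e ∈ H.E, x ∈ e ∧ y ∈ e

/-- There is a path of length `n` from `x` to `y` (each consecutive pair lies
in a common hyperedge). -/
def IsPath (H : HGraph V) (x y : V) (n : ℕ) : Prop :=
  ∃ f : ℕ → V, f 0 = x ∧ f n = y ∧ ∀ i < n, ∃ e ∈ H.E, f i ∈ e ∧ f (i + 1) ∈ e

/-- The graph distance on a hypergraph: the shortest length of a path. -/
def dist (H : HGraph V) (x y : V) : ℕ :=
  sInf {n | H.IsPath x y n}

def Connected (H : HGraph V) : Prop := ∀ x y : V, ∃ n, H.IsPath x y n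

def LocallyFinite (H : HGraph V) : Prop := ∀ x : V, {y | H.Adj x y}.Finite

/-- A hypergraph is simple if no hyperedge is contained in a different one. -/
def Simple (H : HGraph V) : Prop :=
  ∀ e₁ ∈ H.E, ∀ e₂ ∈ H.E, e₁ ≠ e₂ → ¬e₁ ⊆ e₂

/-- The degree of a vertex: the number of its neighbours. -/
def degree (H : HGraph V) (x : V) : ℕ := {y | H.Adj x y}.ncard

end HGraph

/-- A finitely supported probability function on `V`. -/
def IsProb {V : Type*} (μ : V → ℝ) : Prop :=
  (∀ v, 0 ≤ μ v) ∧ (Function.support μ).Finite ∧ ∑' v, μ v = 1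

/-- A coupling of two probability functions. -/
def IsCoupling {V : Type*} (π : V → V → ℝ) (μ ν : V → ℝ) : Prop :=
  (∀ x y, 0 ≤ π x y) ∧ (∀ x, ∑' y, π x y = μ x) ∧ (∀ y, ∑' x, π x y = ν y)

/-- The L¹-Wasserstein distance with respect to the graph distance of `H`. -/
def W1 {V : Type*} (H : HGraph V) (μ ν : V → ℝ) : ℝ :=
  sInf {c | ∃ π, IsCoupling π μ ν ∧
    c = ∑' p : V × V, (H.dist p.1 p.2 : ℝ) * π p.1 p.2}

/-- A sequence of probability measures from `μ` to `ν` each of whose increments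
is supported in a single hyperedge. -/
def WhAdmissible {V : Type*} (H : HGraph V) (μ ν : V → ℝ) (I : ℕ)
    (ξ : ℕ → V → ℝ) : Prop :=
  ξ 0 = μ ∧ ξ I = ν ∧ (∀ i ≤ I, IsProb (ξ i)) ∧
    ∀ i < I, ∃ e ∈ H.E, Function.support (fun v => ξ (i + 1) v - ξ i v) ⊆ e

/-- The new transport distance `W_h`. -/
def Wh {V : Type*} (H : HGraph V) (h : ℝ → ℝ) (μ ν : V → ℝ) : ℝ :=
  sInf {c | ∃ I ξ, WhAdmissible H μ ν I ξ ∧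
    c = ∑ i ∈ Finset.range I, h (W1 H (ξ i) (ξ (i + 1)))}

/-- Assumptions on the concave cost function `h`, with one-sided derivatives
`D0 = h'(0)` and `D1 = h'(1)`. -/
structure CostFn (h : ℝ → ℝ) (D0 D1 : ℝ) : Prop where
  nonneg : ∀ x ∈ Set.Icc (0 : ℝ) 1, 0 ≤ h x
  mono : MonotoneOn h (Set.Icc (0 : ℝ) 1)
  cont : ContinuousOn h (Set.Icc (0 : ℝ) 1)
  concave : ConcaveOn ℝ (Set.Icc (0 : ℝ) 1) h
  zero : h 0 = 0
  d0_pos : 0 < D0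
  d0 : Filter.Tendsto (fun t => h t / t) (nhdsWithin 0 (Set.Ioi 0)) (nhds D0)
  d1 : Filter.Tendsto (fun t => (h 1 - h t) / (1 - t))
    (nhdsWithin 1 (Set.Iio 1)) (nhds D1)

/-- The Dirac measure at a point, as a probability function. -/
def dirac {V : Type*} (x : V) : V → ℝ := fun v => if v = x then 1 else 0

/-- The `α`-lazy uniform random walk at `x`. -/
def rw {V : Type*} (H : HGraph V) (α : ℝ) (x : V) : V → ℝ :=
  fun v => if v = x then α else if H.Adj x v then (1 - α) / (H.degree x) else 0

/-- The `(α,h)`-Ollivier–Ricci curvature. -/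
def ORic {V : Type*} (H : HGraph V) (h : ℝ → ℝ) (α : ℝ) (x y : V) : ℝ :=
  1 - Wh H h (rw H α x) (rw H α y) / Wh H h (dirac x) (dirac y)

/-- The `h`-LLY–Ricci curvature. -/
def hLLY {V : Type*} (H : HGraph V) (h : ℝ → ℝ) (x y : V) : ℝ :=
  Filter.liminf (fun α => ORic H h α x y / (1 - α)) (nhdsWithin 1 (Set.Iio 1))

end
section Aux

open HGraph

variable {V : Type*} {H : HGraph V}

theorem hdist_self (x : V) : H.dist x x = 0 := by
  have : H.IsPath x x 0 := ⟨fun _ => x, rfl, rfl, by omega⟩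
  simpa [HGraph.dist] using Nat.sInf_le (show 0 ∈ {n | H.IsPath x x n} from this)

theorem isPath_dist (hconn : H.Connected) (x y : V) : H.IsPath x y (H.dist x y) :=
  Nat.sInf_mem (hconn x y)

theorem one_le_dist (hconn : H.Connected) {x y : V} (hxy : x ≠ y) : 1 ≤ H.dist x y := by
  rcases Nat.eq_zero_or_pos (H.dist x y) with h0 | h1
  · exfalso
    obtain ⟨f, hf0, hfn, -⟩ := isPath_dist hconn x y
    rw [h0] at hfn
    exact hxy (hf0 ▸ hfn ▸ rfl)
  · exact h1

theorem isPath_trans {x y z : V} {m n : ℕ} (hxy : H.IsPath x y m) (hyz : H.IsPath y z n) :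
    H.IsPath x z (m + n) := by
  obtain ⟨f, hf0, hfm, hf⟩ := hxy
  obtain ⟨g, hg0, hgn, hg⟩ := hyz
  set F : ℕ → V := fun i => if i < m then f i else g (i - m) with hF
  have hF0 : F 0 = x := by
    by_cases hm : 0 < m
    · simp [hF, hm, hf0]
    · have hm0 : m = 0 := by omega
      subst hm0
      show (if 0 < 0 then f 0 else g (0-0)) = x
      rw [if_neg (by omega)]
      show g 0 = x
      rw [hg0, ← hfm]; exact hf0
  have hFmn : F (m + n) = z := by
    have : ¬ (m + n < m) := by omega
    simp only [hF, this, if_false]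
    rw [← hgn]; congr 1; omega
  refine ⟨F, hF0, hFmn, ?_⟩
  intro i hi
  rcases lt_trichotomy (i+1) m with hlt | heq | hgt
  · obtain ⟨e, he, h1, h2⟩ := hf i (by omega)
    exact ⟨e, he, by simp [hF, show i < m by omega, hlt, h1, h2]⟩
  · obtain ⟨e, he, h1, h2⟩ := hf i (by omega)
    refine ⟨e, he, by simp [hF, show i < m by omega, h1], ?_⟩
    simp only [hF, show ¬ (i + 1 < m) by omega, if_false]
    have h3 : i + 1 - m = 0 := by omega
    rw [h3, hg0, ← hfm, ← heq]
    exact h2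
  · obtain ⟨e, he, h1, h2⟩ := hg (i - m) (by omega)
    refine ⟨e, he, ?_, ?_⟩
    · by_cases him : i < m
      · have him' : i = m := by omega
        subst him'
        simp only [hF, him, if_true]
        rw [hfm, ← hg0]
        simpa using h1
      · simpa [hF, him] using h1
    · have h3 : ¬ (i + 1 < m) := by omega
      simp only [hF, h3, if_false]
      have h4 : i + 1 - m = i - m + 1 := by omega
      rw [h4]; exact h2

theorem hdist_triangle (hconn : H.Connected) (x y z : V) :
    H.dist x z ≤ H.dist x y + H.dist y z :=
  Nat.sInf_le (isPath_trans (isPath_dist hconn x y) (isPath_dist hconn y z))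

theorem hdist_le_one_of_mem {e : Set V} (he : e ∈ H.E) {u v : V} (hu : u ∈ e) (hv : v ∈ e) :
    H.dist u v ≤ 1 := by
  refine Nat.sInf_le ⟨fun i => if i = 0 then u else v, rfl, rfl, ?_⟩
  intro i hi
  exact ⟨e, he, by simp [show i = 0 by omega, hu, hv]⟩

end Aux
section W1Aux

open HGraph

variable {V : Type*} [Fintype V] {H : HGraph V}

theorem isProb_sum {μ : V → ℝ} (hμ : IsProb μ) : ∑ v, μ v = 1 := by
  rw [← tsum_fintype (L := .unconditional _)]; exact hμ.2.2

theorem prod_isCoupling {μ ν : V → ℝ} (hμ : IsProb μ) (hν : IsProb ν) :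
    IsCoupling (fun u v => μ u * ν v) μ ν := by
  refine ⟨fun u v => mul_nonneg (hμ.1 u) (hν.1 v), fun u => ?_, fun v => ?_⟩
  · rw [tsum_fintype, ← Finset.mul_sum, isProb_sum hν, mul_one]
  · rw [tsum_fintype]
    simp only [← Finset.sum_mul, isProb_sum hμ, one_mul]

theorem W1_mem_nonneg {μ ν : V → ℝ} {c : ℝ}
    (hc : c ∈ {c | ∃ π, IsCoupling π μ ν ∧
      c = ∑' p : V × V, (H.dist p.1 p.2 : ℝ) * π p.1 p.2}) : 0 ≤ c := by
  obtain ⟨π, hπ, rfl⟩ := hc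
  exact tsum_nonneg fun p => mul_nonneg (by positivity) (hπ.1 p.1 p.2)

theorem W1_nonneg (μ ν : V → ℝ) : 0 ≤ W1 H μ ν :=
  Real.sInf_nonneg fun _ hc => W1_mem_nonneg hc

theorem W1_le_cost {μ ν : V → ℝ} {π : V → V → ℝ} (hπ : IsCoupling π μ ν) :
    W1 H μ ν ≤ ∑ p : V × V, (H.dist p.1 p.2 : ℝ) * π p.1 p.2 := by
  apply csInf_le ⟨0, fun c hc => W1_mem_nonneg hc⟩
  exact ⟨π, hπ, (tsum_fintype _).symm⟩

theorem lipschitz_le_W1 {μ ν : V → ℝ} (hμ : IsProb μ) (hν : IsProb ν) (φ : V → ℝ)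
    (hφ : ∀ u v, φ u - φ v ≤ (H.dist u v : ℝ)) :
    ∑ v, φ v * μ v - ∑ v, φ v * ν v ≤ W1 H μ ν := by
  have hne : Set.Nonempty {c | ∃ π, IsCoupling π μ ν ∧
      c = ∑' p : V × V, (H.dist p.1 p.2 : ℝ) * π p.1 p.2} :=
    ⟨∑' p : V × V, (H.dist p.1 p.2 : ℝ) * (μ p.1 * ν p.2),
      ⟨fun u v => μ u * ν v, prod_isCoupling hμ hν, rfl⟩⟩
  apply le_csInf hne
  rintro c ⟨π, hπ, rfl⟩
  rw [tsum_fintype]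
  have key : ∑ p : V × V, (φ p.1 - φ p.2) * π p.1 p.2
      = ∑ v, φ v * μ v - ∑ v, φ v * ν v := by
    rw [Fintype.sum_prod_type]
    simp only [sub_mul, Finset.sum_sub_distrib]
    congr 1
    · refine Finset.sum_congr rfl fun u _ => ?_
      rw [← Finset.mul_sum, ← tsum_fintype (L := .unconditional _), hπ.2.1 u]
    · rw [Finset.sum_comm]
      refine Finset.sum_congr rfl fun v _ => ?_
      rw [← Finset.mul_sum, ← tsum_fintype (L := .unconditional _), hπ.2.2 v]
  rw [← key]
  apply Finset.sum_le_sum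
  intro p _
  exact mul_le_mul_of_nonneg_right (hφ p.1 p.2) (hπ.1 p.1 p.2)

/-- A coupling witnessing `W1 ≤ 1` for a single admissible step. -/
theorem W1_step_le_one {μ ν : V → ℝ} (hμ : IsProb μ) (hν : IsProb ν)
    {e : Set V} (he : e ∈ H.E)
    (hsupp : Function.support (fun v => ν v - μ v) ⊆ e) :
    W1 H μ ν ≤ 1 := by
  classical
  set pos : V → ℝ := fun v => max (μ v - ν v) 0 with hpos
  set neg : V → ℝ := fun v => max (ν v - μ v) 0 with hneg
  have hpos_nonneg : ∀ v, 0 ≤ pos v := fun v => le_max_right _ _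
  have hneg_nonneg : ∀ v, 0 ≤ neg v := fun v => le_max_right _ _
  have hmin_pos : ∀ v, min (μ v) (ν v) + pos v = μ v := by
    intro v; rcases le_total (μ v) (ν v) with hle | hle <;>
      simp [hpos, min_eq_left, min_eq_right, hle, max_eq_left, max_eq_right, sub_nonpos.2 hle]
  have hmin_neg : ∀ v, min (μ v) (ν v) + neg v = ν v := by
    intro v; rcases le_total (μ v) (ν v) with hle | hle <;>
      simp [hneg, min_eq_left, min_eq_right, hle, max_eq_left, max_eq_right, sub_nonpos.2 hle]
  set M : ℝ := ∑ v, pos v with hM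
  have hM_nonneg : 0 ≤ M := Finset.sum_nonneg fun v _ => hpos_nonneg v
  have hMneg : ∑ v, neg v = M := by
    have h1 : ∑ v, (min (μ v) (ν v) + pos v) = 1 := by simp only [hmin_pos]; exact isProb_sum hμ
    have h2 : ∑ v, (min (μ v) (ν v) + neg v) = 1 := by simp only [hmin_neg]; exact isProb_sum hν
    simp only [Finset.sum_add_distrib] at h1 h2
    rw [hM]; linarith
  have hM_le_one : M ≤ 1 := by
    rw [hM, ← isProb_sum hμ]
    apply Finset.sum_le_sum
    intro v _
    rcases le_total (μ v) (ν v) with hle | hle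
    · simp [hpos, max_eq_right (sub_nonpos.2 hle), hμ.1 v]
    · simp [hpos, max_eq_left (sub_nonneg.2 hle), hν.1 v]
  rcases eq_or_lt_of_le hM_nonneg with hM0 | hM0
  · -- μ = ν
    have hμν : μ = ν := by
      funext v
      have hp : pos v = 0 := by
        have := Finset.sum_eq_zero_iff_of_nonneg (fun v _ => hpos_nonneg v) |>.1 hM0.symm
        exact this v (Finset.mem_univ v)
      have hn : neg v = 0 := by
        have h0 : ∑ v, neg v = 0 := by rw [hMneg, ← hM0]
        have := Finset.sum_eq_zero_iff_of_nonneg (fun v _ => hneg_nonneg v) |>.1 h0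
        exact this v (Finset.mem_univ v)
      have := hmin_pos v
      have := hmin_neg v
      linarith
    subst hμν
    set π : V → V → ℝ := fun u v => if u = v then μ u else 0 with hπd
    have hcpl : IsCoupling π μ μ := by
      refine ⟨fun u v => by by_cases huv : u = v <;> simp [hπd, huv, hμ.1], fun u => ?_, fun v => ?_⟩
      · rw [tsum_fintype]; simp [hπd]
      · rw [tsum_fintype]; simp [hπd, Finset.sum_ite_eq']
    refine le_trans (W1_le_cost hcpl) ?_
    have : ∀ p : V × V, (H.dist p.1 p.2 : ℝ) * π p.1 p.2 = 0 := by
      rintro ⟨u, v⟩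
      by_cases huv : u = v
      · subst huv; simp [hdist_self]
      · simp [hπd, huv]
    rw [Finset.sum_congr rfl fun p _ => this p]
    simp
  · set π : V → V → ℝ := fun u v => (if u = v then min (μ u) (ν u) else 0) + pos u * neg v / M
      with hπd
    have hcpl : IsCoupling π μ ν := by
      refine ⟨fun u v => ?_, fun u => ?_, fun v => ?_⟩
      · have : 0 ≤ pos u * neg v / M := by positivity
        by_cases huv : u = v
        · simp only [hπd, huv, if_true]
          have : 0 ≤ min (μ v) (ν v) := le_min (hμ.1 v) (hν.1 v)
          positivity
        · simpa [hπd, huv] using by positivity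
      · rw [tsum_fintype]
        simp only [hπd, Finset.sum_add_distrib, Finset.sum_ite_eq, Finset.mem_univ, if_true]
        rw [← Finset.sum_div, ← Finset.mul_sum, hMneg, mul_div_assoc,
          div_self (ne_of_gt hM0), mul_one, hmin_pos]
      · rw [tsum_fintype]
        simp only [hπd, Finset.sum_add_distrib, Finset.sum_ite_eq', Finset.mem_univ, if_true]
        rw [← Finset.sum_div, ← Finset.sum_mul, ← hM, mul_comm M (neg v), mul_div_assoc,
          div_self (ne_of_gt hM0), mul_one, hmin_neg]
    refine le_trans (W1_le_cost hcpl) ?_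
    have hterm : ∀ p : V × V, (H.dist p.1 p.2 : ℝ) * π p.1 p.2
        ≤ pos p.1 * neg p.2 / M := by
      rintro ⟨u, v⟩
      by_cases huv : u = v
      · subst huv
        simp only [hdist_self, Nat.cast_zero, zero_mul]
        positivity
      · simp only [hπd, huv, if_false, zero_add]
        by_cases hz : pos u * neg v = 0
        · simp [hz]
        · have hposu : pos u ≠ 0 := fun hh => hz (by rw [hh, zero_mul])
          have hnegv : neg v ≠ 0 := fun hh => hz (by rw [hh, mul_zero])
          have hu : u ∈ e := by
            apply hsupp
            simp only [Function.mem_support]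
            intro h0
            exact hposu (by simp [hpos, show μ u - ν u = 0 by linarith])
          have hv : v ∈ e := by
            apply hsupp
            simp only [Function.mem_support]
            intro h0
            exact hnegv (by simp [hneg, h0])
          have hd : (H.dist u v : ℝ) ≤ 1 := by
            exact_mod_cast hdist_le_one_of_mem he hu hv
          have h0 : 0 ≤ pos u * neg v / M := by positivity
          calc (H.dist u v : ℝ) * (pos u * neg v / M)
              ≤ 1 * (pos u * neg v / M) := mul_le_mul_of_nonneg_right hd h0
            _ = pos u * neg v / M := one_mul _
    have hsum : ∑ p : V × V, pos p.1 * neg p.2 / M = M := by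
      rw [← Finset.sum_div, Fintype.sum_prod_type]
      simp only [← Finset.mul_sum, hMneg]
      rw [← Finset.sum_mul, ← hM, mul_div_assoc, div_self (ne_of_gt hM0), mul_one]
    calc ∑ p : V × V, (H.dist p.1 p.2 : ℝ) * π p.1 p.2
        ≤ ∑ p : V × V, pos p.1 * neg p.2 / M := Finset.sum_le_sum fun p _ => hterm p
      _ = M := hsum
      _ ≤ 1 := hM_le_one

end W1Aux
section HAux

variable {h : ℝ → ℝ} {D0 D1 : ℝ}

theorem h_subadd (hc : CostFn h D0 D1) {a b : ℝ} (ha : 0 ≤ a) (hb : 0 ≤ b)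
    (hab : a + b ≤ 1) : h (a + b) ≤ h a + h b := by
  rcases eq_or_lt_of_le (by linarith : (0:ℝ) ≤ a + b) with h0 | h0
  · rw [← h0]
    have ha0 : a = 0 := by linarith
    have hb0 : b = 0 := by linarith
    simp [ha0, hb0, hc.zero]
  · have hmem : a + b ∈ Set.Icc (0:ℝ) 1 := ⟨le_of_lt h0, hab⟩
    have h0mem : (0:ℝ) ∈ Set.Icc (0:ℝ) 1 := ⟨le_refl _, zero_le_one⟩
    have hcoef : a / (a+b) + b / (a+b) = 1 := by
      rw [← add_div, div_self (ne_of_gt h0)]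
    have hA : a / (a + b) * h (a + b) ≤ h a := by
      have h2 := hc.concave.2 hmem h0mem (div_nonneg ha (le_of_lt h0))
        (div_nonneg hb (le_of_lt h0)) hcoef
      simp only [smul_eq_mul] at h2
      have heq : a / (a+b) * (a+b) + b / (a+b) * 0 = a := by field_simp; ring
      rw [heq, hc.zero, mul_zero, add_zero] at h2
      exact h2
    have hB : b / (a + b) * h (a + b) ≤ h b := by
      have hcoef' : b / (a+b) + a / (a+b) = 1 := by linarith
      have h2 := hc.concave.2 hmem h0mem (div_nonneg hb (le_of_lt h0))
        (div_nonneg ha (le_of_lt h0)) hcoef'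
      simp only [smul_eq_mul] at h2
      have heq : b / (a+b) * (a+b) + a / (a+b) * 0 = b := by field_simp; ring
      rw [heq, hc.zero, mul_zero, add_zero] at h2
      exact h2
    have hC : a / (a+b) * h (a+b) + b / (a+b) * h (a+b) = h (a+b) := by
      rw [← add_mul, hcoef, one_mul]
    linarith

theorem h_karamata (hc : CostFn h D0 D1) {a b : ℝ} (ha : a ∈ Set.Icc (0:ℝ) 1)
    (hb : b ∈ Set.Icc (0:ℝ) 1) (hab : 1 ≤ a + b) :
    h 1 + h (a + b - 1) ≤ h a + h b := by
  set c : ℝ := a + b - 1 with hcdef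
  have hcmem : c ∈ Set.Icc (0:ℝ) 1 := ⟨by simp [hcdef]; linarith [ha.2, hb.2, hab],
    by simp [hcdef]; linarith [ha.2, hb.2]⟩
  rcases eq_or_lt_of_le hcmem.2 with hc1 | hc1
  · have ha1 : a = 1 := by rw [hcdef] at hc1; linarith [ha.2, hb.2]
    have hb1 : b = 1 := by rw [hcdef] at hc1; linarith [ha.2, hb.2]
    rw [hcdef, ha1, hb1]
    norm_num
  · set lam : ℝ := (1 - b) / (1 - c) with hlam
    have h1c : 0 < 1 - c := by linarith
    have hlam0 : 0 ≤ lam := div_nonneg (by linarith [hb.2]) (le_of_lt h1c)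
    have hlc : lam * (1 - c) = 1 - b := div_mul_cancel₀ _ (ne_of_gt h1c)
    have h1mem : (1:ℝ) ∈ Set.Icc (0:ℝ) 1 := ⟨zero_le_one, le_refl _⟩
    have hlam1 : lam ≤ 1 := by
      rw [hlam, div_le_one h1c, hcdef]
      linarith [ha.2]
    have hA : lam * h 1 + (1 - lam) * h c ≤ h a := by
      have hb' : (0:ℝ) ≤ 1 - lam := by linarith
      have hab' : lam + (1 - lam) = 1 := by ring
      have h2 := hc.concave.2 h1mem hcmem hlam0 hb' hab'
      simp only [smul_eq_mul] at h2
      have heq : lam * 1 + (1 - lam) * c = a := by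
        have h3 : lam * 1 + (1 - lam) * c = lam * (1 - c) + c := by ring
        rw [h3, hlc, hcdef]; ring
      rw [heq] at h2
      exact h2
    have hB : (1 - lam) * h 1 + lam * h c ≤ h b := by
      have ha' : (0:ℝ) ≤ 1 - lam := by linarith
      have hab' : (1 - lam) + lam = 1 := by ring
      have h2 := hc.concave.2 h1mem hcmem ha' hlam0 hab'
      simp only [smul_eq_mul] at h2
      have heq : (1 - lam) * 1 + lam * c = b := by
        have h3 : (1 - lam) * 1 + lam * c = 1 - lam * (1 - c) := by ring
        rw [h3, hlc]; ring
      rw [heq] at h2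
      exact h2
    have hC : lam * h 1 + (1-lam) * h c + ((1-lam) * h 1 + lam * h c) = h 1 + h c := by ring
    linarith

theorem h_nonneg' (hc : CostFn h D0 D1) {t : ℝ} (ht : t ∈ Set.Icc (0:ℝ) 1) : 0 ≤ h t :=
  hc.nonneg t ht

theorem h_key (hc : CostFn h D0 D1) :
    ∀ (n : ℕ) (t : ℕ → ℝ), (∀ i < n, t i ∈ Set.Icc (0:ℝ) 1) →
    ∀ (k : ℕ) (s : ℝ), s ∈ Set.Icc (0:ℝ) 1 →
    (k : ℝ) + s ≤ ∑ i ∈ Finset.range n, t i →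
    (k : ℝ) * h 1 + h s ≤ ∑ i ∈ Finset.range n, h (t i) := by
  intro n
  induction n with
  | zero =>
    intro t ht k s hs hsum
    simp only [Finset.range_zero, Finset.sum_empty] at hsum ⊢
    have hk : (k : ℝ) = 0 := by
      have := hs.1
      have : (0:ℝ) ≤ (k:ℝ) := Nat.cast_nonneg k
      linarith [hs.1]
    have hs0 : s = 0 := by
      have : (0:ℝ) ≤ (k:ℝ) := Nat.cast_nonneg k
      linarith [hs.1]
    rw [hk, hs0, hc.zero]; simp
  | succ n ih =>
    intro t ht k s hs hsum
    rw [Finset.sum_range_succ] at hsum ⊢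
    set a : ℝ := t n with hadef
    have hamem : a ∈ Set.Icc (0:ℝ) 1 := ht n (Nat.lt_succ_self n)
    have ht' : ∀ i < n, t i ∈ Set.Icc (0:ℝ) 1 := fun i hi => ht i (Nat.lt_succ_of_lt hi)
    rcases le_total a s with hle | hle
    · have := ih t ht' k (s - a) ⟨by linarith, by linarith [hs.2, hamem.1]⟩ (by linarith)
      have hsub : h s ≤ h (s - a) + h a := by
        have := h_subadd hc (by linarith : (0:ℝ) ≤ s - a) hamem.1 (by linarith [hs.2])
        simpa [sub_add_cancel] using this
      linarith
    · rcases Nat.eq_zero_or_pos k with hk0 | hk0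
      · subst hk0
        have hSnn : 0 ≤ ∑ i ∈ Finset.range n, h (t i) :=
          Finset.sum_nonneg fun i hi => h_nonneg' hc (ht' i (Finset.mem_range.1 hi))
        have hmono : h s ≤ h a := hc.mono hs hamem hle
        simp only [Nat.cast_zero, zero_mul, zero_add]
        linarith
      · obtain ⟨k', rfl⟩ := Nat.exists_eq_succ_of_ne_zero (Nat.pos_iff_ne_zero.1 hk0)
        have hmem' : s + 1 - a ∈ Set.Icc (0:ℝ) 1 := ⟨by linarith [hamem.2, hs.1], by linarith⟩
        have hih := ih t ht' k' (s + 1 - a) hmem' (by push_cast at hsum ⊢; linarith)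
        have hkar : h 1 + h s ≤ h a + h (s + 1 - a) := by
          have := h_karamata hc hamem hmem' (by linarith [hs.1])
          simpa [show a + (s + 1 - a) - 1 = s by ring] using this
        push_cast
        linarith
end HAux
section EAux

open HGraph

variable {V : Type*} [Fintype V] {H : HGraph V}

theorem adj_irrefl (x : V) : ¬ H.Adj x x := fun h => h.1 rfl

theorem isProb_dirac (x : V) : IsProb (dirac (V := V) x) := by
  refine ⟨fun v => by by_cases hv : v = x <;> simp [dirac, hv], Set.toFinite _, ?_⟩
  rw [tsum_fintype]
  simp [dirac]

theorem sum_mul_dirac (x : V) (g : V → ℝ) : ∑ v, g v * dirac x v = g x := by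
  classical
  simp [dirac, mul_ite, Finset.sum_ite_eq']

theorem rw_eq (x : V) (α : ℝ) :
    (rw H α x) = fun v => (if v = x then α else 0)
      + (if H.Adj x v then (1 - α) / (H.degree x) else 0) := by
  funext v
  by_cases hv : v = x
  · subst hv
    simp [rw, adj_irrefl]
  · simp [rw, hv]

theorem degree_eq_card (x : V) [DecidablePred (H.Adj x)] :
    H.degree x = (Finset.univ.filter (fun v => H.Adj x v)).card := by
  rw [HGraph.degree, ← Set.toFinset_setOf]
  exact Set.ncard_eq_toFinset_card' _

theorem sum_mul_rw (x : V) (α : ℝ) (g : V → ℝ) [DecidablePred (H.Adj x)] :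
    ∑ v, g v * rw H α x v
      = g x * α + ((1 - α) / (H.degree x)) *
          ∑ v ∈ Finset.univ.filter (fun v => H.Adj x v), g v := by
  rw [rw_eq]
  simp only [mul_add, Finset.sum_add_distrib, mul_ite, mul_zero]
  congr 1
  · simp [Finset.sum_ite_eq']
  · rw [Finset.sum_ite, Finset.sum_const_zero, add_zero, ← Finset.sum_mul, mul_comm]

theorem isProb_rw (x : V) {α : ℝ} (hα : α ∈ Set.Icc (0:ℝ) 1) (hdeg : 0 < H.degree x) :
    IsProb (rw H α x) := by
  classical
  refine ⟨fun v => ?_, Set.toFinite _, ?_⟩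
  · by_cases hv : v = x
    · simp [rw, hv, hα.1]
    · by_cases ha : H.Adj x v
      · simp only [rw, hv, if_false, ha, if_true]
        exact div_nonneg (by linarith [hα.2]) (Nat.cast_nonneg _)
      · simp [rw, hv, ha]
  · rw [tsum_fintype]
    have := sum_mul_rw (H := H) x α (fun _ => 1)
    simp only [one_mul] at this
    rw [this, Finset.sum_const, ← degree_eq_card, nsmul_eq_mul, mul_one]
    rw [div_mul_cancel₀ _ (by exact_mod_cast Nat.pos_iff_ne_zero.1 hdeg)]
    ring

theorem exists_adj_aux : ∀ (n : ℕ) (x z : V), z ≠ x → H.IsPath x z n → ∃ w, H.Adj x w := by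
  intro n
  induction n with
  | zero =>
    rintro x z hz ⟨f, hf0, hfn, -⟩
    exact absurd (hf0.symm.trans hfn) (Ne.symm hz)
  | succ n ih =>
    rintro x z hz ⟨f, hf0, hfn, hstep⟩
    by_cases h1 : f 1 = x
    · exact ih x z hz ⟨fun i => f (i + 1), h1, hfn, fun i hi => hstep (i + 1) (by omega)⟩
    · obtain ⟨e, he, hx, hy⟩ := hstep 0 (by omega)
      rw [hf0] at hx
      exact ⟨f 1, Ne.symm h1, e, he, hx, hy⟩

theorem exists_adj (hconn : H.Connected) {x z : V} (hz : z ≠ x) : ∃ w, H.Adj x w := by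
  obtain ⟨n, hp⟩ := hconn x z
  exact exists_adj_aux n x z hz hp

theorem degree_pos (hconn : H.Connected) {x z : V} (hz : z ≠ x) : 0 < H.degree x := by
  classical
  obtain ⟨w, hw⟩ := exists_adj hconn hz
  rw [degree_eq_card]
  exact Finset.card_pos.2 ⟨w, by simp [hw]⟩

end EAux
section ChainAux

open HGraph

variable {V : Type*} [Fintype V] {H : HGraph V}

theorem whAdmissible_single {μ ν : V → ℝ} (hμ : IsProb μ) (hν : IsProb ν)
    {e : Set V} (he : e ∈ H.E)
    (hsupp : Function.support (fun v => ν v - μ v) ⊆ e) :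
    WhAdmissible H μ ν 1 (fun i => if i = 0 then μ else ν) := by
  refine ⟨by simp, by simp, fun i hi => ?_, fun i hi => ?_⟩
  · by_cases h0 : i = 0 <;> simp [h0, hμ, hν]
  · have h0 : i = 0 := by omega
    subst h0
    exact ⟨e, he, by simpa using hsupp⟩

theorem whAdmissible_concat {μ ν ρ : V → ℝ} {I J : ℕ} {ξ η : ℕ → V → ℝ}
    (hξ : WhAdmissible H μ ν I ξ) (hη : WhAdmissible H ν ρ J η) :
    ∃ κ, WhAdmissible H μ ρ (I + J) κ := by
  obtain ⟨hξ0, hξI, hξp, hξs⟩ := hξ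
  obtain ⟨hη0, hηJ, hηp, hηs⟩ := hη
  set κ : ℕ → V → ℝ := fun i => if i < I then ξ i else η (i - I) with hκ
  have hκ_lt : ∀ i, i ≤ I → κ i = ξ i := by
    intro i hi
    by_cases h : i < I
    · simp [hκ, h]
    · have hiI : i = I := by omega
      subst hiI
      simp [hκ, h, hη0, hξI]
  have hκ_ge : ∀ i, I ≤ i → κ i = η (i - I) := by
    intro i hi
    have h : ¬ i < I := by omega
    simp [hκ, h]
  refine ⟨κ, ?_, ?_, fun i hi => ?_, fun i hi => ?_⟩
  · rw [hκ_lt 0 (Nat.zero_le I), hξ0]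
  · rw [hκ_ge (I + J) (Nat.le_add_right I J)]
    simpa using hηJ
  · by_cases h : i ≤ I
    · rw [hκ_lt i h]; exact hξp i h
    · rw [hκ_ge i (by omega)]; exact hηp (i - I) (by omega)
  · by_cases h : i < I
    · rw [hκ_lt i (le_of_lt h), hκ_lt (i+1) h]
      exact hξs i h
    · rw [hκ_ge i (by omega), hκ_ge (i+1) (by omega),
        show i + 1 - I = (i - I) + 1 by omega]
      exact hηs (i - I) (by omega)

theorem whAdmissible_reverse {μ ν : V → ℝ} {I : ℕ} {ξ : ℕ → V → ℝ}
    (hξ : WhAdmissible H μ ν I ξ) :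
    WhAdmissible H ν μ I (fun i => ξ (I - i)) := by
  obtain ⟨hξ0, hξI, hξp, hξs⟩ := hξ
  refine ⟨by simpa using hξI, by simpa using hξ0, fun i hi => hξp (I - i) (by omega),
    fun i hi => ?_⟩
  obtain ⟨e, he, hsupp⟩ := hξs (I - (i + 1)) (by omega)
  refine ⟨e, he, fun v hv => hsupp ?_⟩
  simp only [Function.mem_support] at hv ⊢
  rw [show I - (i+1) + 1 = I - i by omega]
  intro h0
  exact hv (by linarith [h0])

theorem whAdmissible_path {u w : V} {n : ℕ} {f : ℕ → V} (hf0 : f 0 = u) (hfn : f n = w)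
    (hstep : ∀ i < n, ∃ e ∈ H.E, f i ∈ e ∧ f (i + 1) ∈ e) :
    WhAdmissible H (dirac u) (dirac w) n (fun i => dirac (f i)) := by
  refine ⟨?_, ?_, fun i _ => isProb_dirac _, fun i hi => ?_⟩
  case _ => show dirac (f 0) = dirac u; rw [hf0]
  case _ => show dirac (f n) = dirac w; rw [hfn]
  obtain ⟨e, he, h1, h2⟩ := hstep i hi
  refine ⟨e, he, fun v hv => ?_⟩
  simp only [Function.mem_support, dirac] at hv
  by_cases hv1 : v = f (i + 1)
  · exact hv1 ▸ h2
  · by_cases hv2 : v = f i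
    · exact hv2 ▸ h1
    · simp [hv1, hv2] at hv

/-- Any probability measure supported on `x` and a set of neighbours of `x` admits
an admissible chain to the Dirac measure at `x`. -/
theorem chain_to_dirac (x : V) (s : Finset V) :
    ∀ μ : V → ℝ, IsProb μ → (∀ v, μ v ≠ 0 → v = x ∨ v ∈ s) → (∀ v ∈ s, H.Adj x v) →
    ∃ I ξ, WhAdmissible H μ (dirac x) I ξ := by
  classical
  induction s using Finset.induction_on with
  | empty =>
    intro μ hμ hsupp _
    have hμx : μ = dirac x := by
      funext v
      by_cases hv : v = x
      · subst hv
        have : ∀ w ∈ Finset.univ, w ≠ v → μ w = 0 := by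
          intro w _ hw
          by_contra h0
          rcases hsupp w h0 with h | h
          · exact hw h
          · simp at h
        have hsum := isProb_sum hμ
        rw [← Finset.sum_subset (Finset.subset_univ {v}) (fun w _ hw => this w (Finset.mem_univ w) (by simpa using hw))] at hsum
        simpa [dirac] using hsum
      · have : μ v = 0 := by
          by_contra h0
          rcases hsupp v h0 with h | h
          · exact hv h
          · simp at h
        simp [dirac, hv, this]
    exact ⟨0, fun _ => μ, rfl, hμx, fun i _ => hμ, fun i hi => absurd hi (by omega)⟩
  | @insert z s hz ih =>
    intro μ hμ hsupp hadj
    have hadjz : H.Adj x z := hadj z (Finset.mem_insert_self z s)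
    have hzx : z ≠ x := fun h => (adj_irrefl x) (h ▸ hadjz)
    set μ' : V → ℝ := fun v => if v = x then μ x + μ z else if v = z then 0 else μ v with hμ'def
    have hdiff : ∀ v, μ' v - μ v = (if v = x then μ z else 0) + (if v = z then -(μ z) else 0) := by
      intro v
      by_cases hvx : v = x
      · subst hvx
        simp [hμ'def, (Ne.symm hzx)]
      · by_cases hvz : v = z
        · subst hvz
          simp [hμ'def, hvx]
        · simp [hμ'def, hvx, hvz]
    have hμ' : IsProb μ' := by
      refine ⟨fun v => ?_, Set.toFinite _, ?_⟩
      · by_cases hvx : v = x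
        · simp only [hμ'def, if_pos hvx]
          exact add_nonneg (hμ.1 x) (hμ.1 z)
        · by_cases hvz : v = z
          · simp [hμ'def, hvx, hvz, hzx]
          · simpa [hμ'def, hvx, hvz] using hμ.1 v
      · rw [tsum_fintype]
        have : ∑ v, μ' v = ∑ v, (μ v + ((if v = x then μ z else 0) + (if v = z then -(μ z) else 0))) := by
          refine Finset.sum_congr rfl fun v _ => ?_
          have := hdiff v
          linarith
        rw [this]
        simp only [Finset.sum_add_distrib, Finset.sum_ite_eq', Finset.mem_univ, if_true]
        rw [← tsum_fintype (L := .unconditional _), hμ.2.2]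
        ring
    obtain ⟨e, he, hxe, hze⟩ := hadjz.2
    have hstep : WhAdmissible H μ μ' 1 (fun i => if i = 0 then μ else μ') := by
      refine whAdmissible_single hμ hμ' he ?_
      intro v hv
      simp only [Function.mem_support, hdiff v] at hv
      by_cases hvx : v = x
      · exact hvx ▸ hxe
      · by_cases hvz : v = z
        · exact hvz ▸ hze
        · simp [hvx, hvz] at hv
    have hsupp' : ∀ v, μ' v ≠ 0 → v = x ∨ v ∈ s := by
      intro v hv
      by_cases hvx : v = x
      · exact Or.inl hvx
      · right
        by_cases hvz : v = z
        · exfalso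
          apply hv
          simp [hμ'def, hvx, hvz, hzx]
        · have hne : μ v ≠ 0 := by simpa [hμ'def, hvx, hvz] using hv
          rcases hsupp v hne with h | h
          · exact absurd h hvx
          · rcases Finset.mem_insert.1 h with h | h
            · exact absurd h hvz
            · exact h
    obtain ⟨I, ξ, hchain⟩ := ih μ' hμ' hsupp' (fun v hv => hadj v (Finset.mem_insert_of_mem hv))
    obtain ⟨κ, hκ⟩ := whAdmissible_concat hstep hchain
    exact ⟨1 + I, κ, hκ⟩

end ChainAux
section WhAux

open HGraph

variable {V : Type*} [Fintype V] {H : HGraph V} {h : ℝ → ℝ} {D0 D1 : ℝ}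

theorem W1_step_mem {μ ν : V → ℝ} {I : ℕ} {ξ : ℕ → V → ℝ}
    (hadm : WhAdmissible H μ ν I ξ) {i : ℕ} (hi : i < I) :
    W1 H (ξ i) (ξ (i + 1)) ∈ Set.Icc (0:ℝ) 1 := by
  obtain ⟨e, he, hsupp⟩ := hadm.2.2.2 i hi
  exact ⟨W1_nonneg _ _, W1_step_le_one (hadm.2.2.1 i (le_of_lt hi))
    (hadm.2.2.1 (i+1) hi) he hsupp⟩

theorem wh_mem_nonneg (hc : CostFn h D0 D1) {μ ν : V → ℝ} {c : ℝ}
    (hmem : c ∈ {c | ∃ I ξ, WhAdmissible H μ ν I ξ ∧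
      c = ∑ i ∈ Finset.range I, h (W1 H (ξ i) (ξ (i + 1)))}) : 0 ≤ c := by
  obtain ⟨I, ξ, hadm, rfl⟩ := hmem
  exact Finset.sum_nonneg fun i hi => h_nonneg' hc (W1_step_mem hadm (Finset.mem_range.1 hi))

theorem Wh_le_chain (hc : CostFn h D0 D1) {μ ν : V → ℝ} {I : ℕ} {ξ : ℕ → V → ℝ}
    (hadm : WhAdmissible H μ ν I ξ) :
    Wh H h μ ν ≤ ∑ i ∈ Finset.range I, h (W1 H (ξ i) (ξ (i + 1))) :=
  csInf_le ⟨0, fun _ hmem => wh_mem_nonneg hc hmem⟩ ⟨I, ξ, hadm, rfl⟩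

theorem le_Wh (hconn : H.Connected) (hc : CostFn h D0 D1) {μ ν : V → ℝ} (y0 : V)
    (k : ℕ) (s : ℝ) (hs : s ∈ Set.Icc (0:ℝ) 1)
    (hne : ∃ I ξ, WhAdmissible H μ ν I ξ)
    (hbound : (k : ℝ) + s ≤
      (∑ v, (H.dist v y0 : ℝ) * μ v) - ∑ v, (H.dist v y0 : ℝ) * ν v) :
    (k : ℝ) * h 1 + h s ≤ Wh H h μ ν := by
  obtain ⟨I₀, ξ₀, hadm₀⟩ := hne
  have hne' : Set.Nonempty {c | ∃ I ξ, WhAdmissible H μ ν I ξ ∧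
      c = ∑ i ∈ Finset.range I, h (W1 H (ξ i) (ξ (i + 1)))} :=
    ⟨∑ i ∈ Finset.range I₀, h (W1 H (ξ₀ i) (ξ₀ (i+1))), I₀, ξ₀, hadm₀, rfl⟩
  apply le_csInf hne'
  rintro c ⟨I, ξ, hadm, rfl⟩
  set φ : V → ℝ := fun v => (H.dist v y0 : ℝ) with hφdef
  have hφ : ∀ u v : V, φ u - φ v ≤ (H.dist u v : ℝ) := by
    intro u v
    have := hdist_triangle hconn u v y0
    have h2 : (H.dist u y0 : ℝ) ≤ (H.dist u v : ℝ) + (H.dist v y0 : ℝ) := by exact_mod_cast this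
    simp only [hφdef]
    linarith
  have hstep : ∀ i < I, (∑ v, φ v * ξ i v) - ∑ v, φ v * ξ (i+1) v ≤ W1 H (ξ i) (ξ (i+1)) :=
    fun i hi => lipschitz_le_W1 (hadm.2.2.1 i (le_of_lt hi)) (hadm.2.2.1 (i+1) hi) φ hφ
  have htel : ∑ i ∈ Finset.range I, ((∑ v, φ v * ξ i v) - ∑ v, φ v * ξ (i+1) v)
      = (∑ v, φ v * μ v) - ∑ v, φ v * ν v := by
    rw [Finset.sum_range_sub' (f := fun i => ∑ v, φ v * ξ i v), hadm.1, hadm.2.1]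
  have hsum : (k : ℝ) + s ≤ ∑ i ∈ Finset.range I, W1 H (ξ i) (ξ (i+1)) := by
    calc (k : ℝ) + s ≤ (∑ v, φ v * μ v) - ∑ v, φ v * ν v := hbound
      _ = ∑ i ∈ Finset.range I, ((∑ v, φ v * ξ i v) - ∑ v, φ v * ξ (i+1) v) := htel.symm
      _ ≤ ∑ i ∈ Finset.range I, W1 H (ξ i) (ξ (i+1)) :=
        Finset.sum_le_sum fun i hi => hstep i (Finset.mem_range.1 hi)
  exact h_key hc I (fun i => W1 H (ξ i) (ξ (i+1)))
    (fun i hi => W1_step_mem hadm hi) k s hs hsum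

theorem h_one_pos (hc : CostFn h D0 D1) : 0 < h 1 := by
  have hev : ∀ᶠ t in nhdsWithin (0:ℝ) (Set.Ioi 0), D0 / 2 < h t / t := by
    have := hc.d0.eventually (eventually_gt_nhds (by linarith [hc.d0_pos] : D0 / 2 < D0))
    exact this
  have hmem : Set.Ioo (0:ℝ) 1 ∈ nhdsWithin (0:ℝ) (Set.Ioi 0) :=
    Ioo_mem_nhdsGT_of_mem ⟨le_refl _, zero_lt_one⟩
  obtain ⟨t, ht1, ht2⟩ := (hev.and (eventually_of_mem hmem fun t ht => ht)).exists
  have htpos : 0 < t := ht2.1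
  have hht : 0 < h t := by
    have : 0 < h t / t := lt_trans (by linarith [hc.d0_pos]) ht1
    exact (div_pos_iff.1 this).resolve_right (fun hcon => absurd htpos (by linarith [hcon.2])) |>.1
  calc (0:ℝ) < h t := hht
    _ ≤ h 1 := hc.mono ⟨le_of_lt htpos, le_of_lt ht2.2⟩ ⟨zero_le_one, le_refl 1⟩ (le_of_lt ht2.2)

theorem Wh_dirac_le (hconn : H.Connected) (hc : CostFn h D0 D1) (x y : V) :
    Wh H h (dirac x) (dirac y) ≤ (H.dist x y : ℝ) * h 1 := by
  obtain ⟨f, hf0, hfn, hstep⟩ := isPath_dist hconn x y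
  have hadm := whAdmissible_path (H := H) hf0 hfn hstep
  refine le_trans (Wh_le_chain hc hadm) ?_
  have : ∀ i ∈ Finset.range (H.dist x y),
      h (W1 H (dirac (f i)) (dirac (f (i+1)))) ≤ h 1 := by
    intro i hi
    have hmem := W1_step_mem hadm (Finset.mem_range.1 hi)
    exact hc.mono hmem ⟨zero_le_one, le_refl 1⟩ hmem.2
  calc ∑ i ∈ Finset.range (H.dist x y), h (W1 H (dirac (f i)) (dirac (f (i+1))))
      ≤ ∑ _i ∈ Finset.range (H.dist x y), h 1 := Finset.sum_le_sum this
    _ = (H.dist x y : ℝ) * h 1 := by rw [Finset.sum_const, Finset.card_range, nsmul_eq_mul]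

theorem le_Wh_dirac (hconn : H.Connected) (hc : CostFn h D0 D1) {x y : V} (hxy : x ≠ y) :
    (H.dist x y : ℝ) * h 1 ≤ Wh H h (dirac x) (dirac y) := by
  have hd1 : 1 ≤ H.dist x y := one_le_dist hconn hxy
  have hne : ∃ I ξ, WhAdmissible H (dirac (V:=V) x) (dirac y) I ξ := by
    obtain ⟨f, hf0, hfn, hstep⟩ := isPath_dist hconn x y
    exact ⟨_, _, whAdmissible_path (H := H) hf0 hfn hstep⟩
  have := le_Wh hconn hc y (H.dist x y - 1) 1 ⟨zero_le_one, le_refl 1⟩ hne ?_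
  · have hcast : ((H.dist x y - 1 : ℕ) : ℝ) = (H.dist x y : ℝ) - 1 := by
      push_cast [hd1]; ring
    rw [hcast] at this
    linarith
  · rw [sum_mul_dirac, sum_mul_dirac, hdist_self]
    have hcast : ((H.dist x y - 1 : ℕ) : ℝ) = (H.dist x y : ℝ) - 1 := by
      push_cast [hd1]; ring
    rw [hcast]
    simp

end WhAux
section CurvAux

open HGraph

variable {V : Type*} [Fintype V] {H : HGraph V} {h : ℝ → ℝ} {D0 D1 : ℝ}

theorem chain_rw_to_dirac (hconn : H.Connected) {x y : V} (hxy : x ≠ y)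
    {α : ℝ} (hα : α ∈ Set.Icc (0:ℝ) 1) :
    ∃ I ξ, WhAdmissible H (rw H α x) (dirac x) I ξ := by
  classical
  have hdeg : 0 < H.degree x := degree_pos hconn (Ne.symm hxy)
  refine chain_to_dirac x (Finset.univ.filter (fun v => H.Adj x v)) _
    (isProb_rw x hα hdeg) (fun v hv => ?_) (fun v hv => by simpa using hv)
  by_cases hvx : v = x
  · exact Or.inl hvx
  · by_cases hadj : H.Adj x v
    · exact Or.inr (by simp [hadj])
    · exact absurd (by simp [rw, hvx, hadj]) hv

theorem chain_rw_rw (hconn : H.Connected) {x y : V} (hxy : x ≠ y)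
    {α : ℝ} (hα : α ∈ Set.Icc (0:ℝ) 1) :
    ∃ I ξ, WhAdmissible H (rw H α x) (rw H α y) I ξ := by
  obtain ⟨I₁, ξ₁, h₁⟩ := chain_rw_to_dirac hconn hxy hα
  obtain ⟨I₃, ξ₃, h₃⟩ := chain_rw_to_dirac hconn (Ne.symm hxy) hα
  obtain ⟨f, hf0, hfn, hstep⟩ := isPath_dist hconn x y
  have h₂ := whAdmissible_path (H := H) hf0 hfn hstep
  obtain ⟨κ, hκ⟩ := whAdmissible_concat h₁ h₂
  obtain ⟨κ', hκ'⟩ := whAdmissible_concat hκ (whAdmissible_reverse h₃)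
  exact ⟨_, κ', hκ'⟩

theorem le_Wh_rw (hconn : H.Connected) (hc : CostFn h D0 D1) {x y : V}
    (hd : 2 ≤ H.dist x y) {α : ℝ} (hα : 1/2 ≤ α) (hα1 : α < 1) :
    ((H.dist x y : ℝ) - 1) * h 1 + h (2*α - 1) ≤ Wh H h (rw H α x) (rw H α y) := by
  classical
  have hxy : x ≠ y := by
    intro heq
    rw [heq, hdist_self] at hd
    omega
  have hαmem : α ∈ Set.Icc (0:ℝ) 1 := ⟨by linarith, le_of_lt hα1⟩
  have hdegx : 0 < H.degree x := degree_pos hconn (Ne.symm hxy)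
  have hdegy : 0 < H.degree y := degree_pos hconn hxy
  have hdcast : (2:ℝ) ≤ (H.dist x y : ℝ) := by exact_mod_cast hd
  set d : ℝ := (H.dist x y : ℝ) with hddef
  set φ : V → ℝ := fun v => (H.dist v y : ℝ) with hφdef
  -- lower bound on the integral of φ against rw x
  have hAx : α * d + (1 - α) * (d - 1) ≤ ∑ v, φ v * rw H α x v := by
    rw [sum_mul_rw]
    have hφx : φ x = d := rfl
    have hlow : ∀ v ∈ Finset.univ.filter (fun v => H.Adj x v), d - 1 ≤ φ v := by
      intro v hv
      have hadj : H.Adj x v := by simpa using hv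
      obtain ⟨e, he, hxe, hve⟩ := hadj.2
      have h1 : H.dist x v ≤ 1 := hdist_le_one_of_mem he hxe hve
      have h2 : H.dist x y ≤ H.dist x v + H.dist v y := hdist_triangle hconn x v y
      have : H.dist x y ≤ 1 + H.dist v y := le_trans h2 (by omega)
      have := (Nat.cast_le (α := ℝ)).2 this
      push_cast at this
      simp only [hφdef]
      linarith
    have hcard : ((Finset.univ.filter (fun v => H.Adj x v)).card : ℝ) = (H.degree x : ℝ) := by
      rw [degree_eq_card (H := H) x]
    have hsum : ((H.degree x : ℝ)) * (d - 1)
        ≤ ∑ v ∈ Finset.univ.filter (fun v => H.Adj x v), φ v := by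
      have := Finset.card_nsmul_le_sum _ _ _ hlow
      rw [nsmul_eq_mul, hcard] at this
      exact this
    have hcoef : 0 ≤ (1 - α) / (H.degree x : ℝ) :=
      div_nonneg (by linarith) (Nat.cast_nonneg _)
    have : (1 - α) / (H.degree x : ℝ) * ((H.degree x : ℝ) * (d - 1))
        ≤ (1 - α) / (H.degree x : ℝ) * ∑ v ∈ Finset.univ.filter (fun v => H.Adj x v), φ v :=
      mul_le_mul_of_nonneg_left hsum hcoef
    have hne0 : (H.degree x : ℝ) ≠ 0 := by exact_mod_cast Nat.pos_iff_ne_zero.1 hdegx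
    have heq : (1 - α) / (H.degree x : ℝ) * ((H.degree x : ℝ) * (d - 1)) = (1 - α) * (d - 1) := by
      field_simp
    rw [heq] at this
    rw [hφx]
    linarith
  -- upper bound on the integral of φ against rw y
  have hAy : ∑ v, φ v * rw H α y v ≤ 1 - α := by
    rw [sum_mul_rw]
    have hφy : φ y = 0 := by simp [hφdef, hdist_self]
    have hup : ∀ v ∈ Finset.univ.filter (fun v => H.Adj y v), φ v ≤ 1 := by
      intro v hv
      have hadj : H.Adj y v := by simpa using hv
      obtain ⟨e, he, hye, hve⟩ := hadj.2
      have h1 : H.dist v y ≤ 1 := hdist_le_one_of_mem he hve hye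
      have := (Nat.cast_le (α := ℝ)).2 h1
      simpa [hφdef] using this
    have hcard : ((Finset.univ.filter (fun v => H.Adj y v)).card : ℝ) = (H.degree y : ℝ) := by
      rw [degree_eq_card (H := H) y]
    have hsum : ∑ v ∈ Finset.univ.filter (fun v => H.Adj y v), φ v ≤ (H.degree y : ℝ) := by
      have := Finset.sum_le_card_nsmul _ _ _ hup
      rw [nsmul_eq_mul, mul_one, hcard] at this
      exact this
    have hcoef : 0 ≤ (1 - α) / (H.degree y : ℝ) :=
      div_nonneg (by linarith) (Nat.cast_nonneg _)
    have hle : (1 - α) / (H.degree y : ℝ) * ∑ v ∈ Finset.univ.filter (fun v => H.Adj y v), φ v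
        ≤ (1 - α) / (H.degree y : ℝ) * (H.degree y : ℝ) :=
      mul_le_mul_of_nonneg_left hsum hcoef
    have heq : (1 - α) / (H.degree y : ℝ) * (H.degree y : ℝ) = 1 - α := by
      rw [div_mul_cancel₀ _ (by exact_mod_cast Nat.pos_iff_ne_zero.1 hdegy)]
    rw [heq] at hle
    rw [hφy]
    linarith
  have hd1 : 1 ≤ H.dist x y := by omega
  have hkcast : ((H.dist x y - 1 : ℕ) : ℝ) = d - 1 := by
    rw [hddef]; push_cast [hd1]; ring
  have := le_Wh hconn hc y (H.dist x y - 1) (2*α - 1)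
    ⟨by linarith, by linarith⟩ (chain_rw_rw hconn hxy hαmem) ?_
  · rwa [hkcast] at this
  · rw [hkcast]
    have : α * d + (1 - α) * (d - 1) - (1 - α) ≤
        (∑ v, φ v * rw H α x v) - ∑ v, φ v * rw H α y v := by linarith
    refine le_trans ?_ this
    nlinarith [hdcast]

end CurvAux
section FinalFinite

open HGraph Filter

variable {V : Type*} [Fintype V] {H : HGraph V} {h : ℝ → ℝ} {D0 : ℝ}

theorem ORic_le (hconn : H.Connected) (hc : CostFn h D0 0) {x y : V}
    (hd : 2 ≤ H.dist x y) {α : ℝ} (hα : 1/2 ≤ α) (hα1 : α < 1) :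
    ORic H h α x y ≤ (h 1 - h (2*α - 1)) / ((H.dist x y : ℝ) * h 1) := by
  have hxy : x ≠ y := by
    intro heq; rw [heq, hdist_self] at hd; omega
  have hdcast : (2:ℝ) ≤ (H.dist x y : ℝ) := by exact_mod_cast hd
  set d : ℝ := (H.dist x y : ℝ) with hddef
  have h1pos : 0 < h 1 := h_one_pos hc
  have hdh1 : 0 < d * h 1 := mul_pos (by linarith) h1pos
  have hWδ : Wh H h (dirac x) (dirac y) = d * h 1 :=
    le_antisymm (Wh_dirac_le hconn hc x y) (le_Wh_dirac hconn hc hxy)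
  have hWm : (d - 1) * h 1 + h (2*α - 1) ≤ Wh H h (rw H α x) (rw H α y) :=
    le_Wh_rw hconn hc hd hα hα1
  have hA0 : 0 ≤ (d - 1) * h 1 + h (2*α - 1) := by
    have := h_nonneg' hc (t := 2*α - 1) ⟨by linarith, by linarith⟩
    nlinarith
  show 1 - Wh H h (rw H α x) (rw H α y) / Wh H h (dirac x) (dirac y)
      ≤ (h 1 - h (2*α - 1)) / (d * h 1)
  rw [hWδ]
  have hdiv : ((d - 1) * h 1 + h (2*α - 1)) / (d * h 1)
      ≤ Wh H h (rw H α x) (rw H α y) / (d * h 1) :=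
    (div_le_div_iff_of_pos_right hdh1).2 hWm
  have key : 1 - ((d - 1) * h 1 + h (2*α - 1)) / (d * h 1)
      = (h 1 - h (2*α - 1)) / (d * h 1) := by
    field_simp
    ring
  linarith

theorem eventually_ORic_div (hconn : H.Connected) (hc : CostFn h D0 0) {x y : V}
    (hd : 2 ≤ H.dist x y) {ε : ℝ} (hε : 0 < ε) :
    ∀ᶠ α in nhdsWithin (1:ℝ) (Set.Iio 1), ORic H h α x y / (1 - α) ≤ ε := by
  have h1pos : 0 < h 1 := h_one_pos hc
  have hdcast : (2:ℝ) ≤ (H.dist x y : ℝ) := by exact_mod_cast hd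
  set d : ℝ := (H.dist x y : ℝ) with hddef
  have hdh1 : 0 < d * h 1 := mul_pos (by linarith) h1pos
  have hδpos : 0 < ε * (d * h 1) / 2 := by positivity
  have hcomp : Tendsto (fun α : ℝ => 2*α - 1) (nhdsWithin 1 (Set.Iio 1))
      (nhdsWithin 1 (Set.Iio 1)) := by
    apply tendsto_nhdsWithin_of_tendsto_nhds_of_eventually_within
    · have htc : Tendsto (fun α : ℝ => 2*α - 1) (nhds 1) (nhds 1) := by
        have hcont : Continuous (fun α : ℝ => 2*α - 1) := by continuity
        have ht := hcont.tendsto (1:ℝ)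
        norm_num at ht
        exact ht
      exact htc.mono_left nhdsWithin_le_nhds
    · filter_upwards [self_mem_nhdsWithin] with α hα
      simp only [Set.mem_Iio] at hα ⊢
      linarith
  have hev1 : ∀ᶠ α in nhdsWithin (1:ℝ) (Set.Iio 1),
      (h 1 - h (2*α - 1)) / (1 - (2*α - 1)) < ε * (d * h 1) / 2 :=
    hcomp.eventually (hc.d1.eventually (eventually_lt_nhds hδpos))
  have hev2 : ∀ᶠ α in nhdsWithin (1:ℝ) (Set.Iio 1), α ∈ Set.Ioo (1/2 : ℝ) 1 :=
    Ioo_mem_nhdsLT_of_mem ⟨by norm_num, le_refl 1⟩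
  filter_upwards [hev1, hev2] with α h1ev h2ev
  have hα : 1/2 ≤ α := le_of_lt h2ev.1
  have hα1 : α < 1 := h2ev.2
  have h1α : 0 < 1 - α := by linarith
  have hOR := ORic_le hconn hc hd hα hα1
  have heq2 : 1 - (2*α - 1) = 2*(1-α) := by ring
  rw [heq2] at h1ev
  have hnum : h 1 - h (2*α - 1) < ε * (d * h 1) * (1 - α) := by
    rw [div_lt_iff₀ (by linarith : (0:ℝ) < 2*(1-α))] at h1ev
    have : ε * (d * h 1) / 2 * (2*(1-α)) = ε * (d * h 1) * (1 - α) := by ring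
    linarith
  calc ORic H h α x y / (1 - α)
      ≤ ((h 1 - h (2*α - 1)) / (d * h 1)) / (1 - α) := (div_le_div_iff_of_pos_right h1α).2 hOR
    _ = (h 1 - h (2*α - 1)) / (d * h 1 * (1 - α)) := by rw [div_div]
    _ ≤ ε := by
        rw [div_le_iff₀ (by positivity)]
        nlinarith
end FinalFinite
section InfiniteCase

open HGraph Filter

variable {V : Type*} {H : HGraph V}

theorem W1_nonneg' (μ ν : V → ℝ) : 0 ≤ W1 H μ ν := by
  apply Real.sInf_nonneg
  rintro c ⟨π, hπ, rfl⟩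
  exact tsum_nonneg fun p => mul_nonneg (by positivity) (hπ.1 p.1 p.2)

theorem not_summable_of_one_le_on_infinite {ι : Type*} {f : ι → ℝ} {S : Set ι}
    (hS : S.Infinite) (hf : ∀ i ∈ S, 1 ≤ f i) : ¬ Summable f := by
  intro hs
  have hev : ∀ᶠ i in Filter.cofinite, f i < 1 :=
    hs.tendsto_cofinite_zero.eventually (eventually_lt_nhds zero_lt_one)
  have hfin : {i | ¬ f i < 1}.Finite := Filter.eventually_cofinite.1 hev
  exact hS (hfin.subset fun i hi => not_lt.2 (hf i hi))

theorem W1_eq_zero_infinite [Infinite V] (hconn : H.Connected) {μ ν : V → ℝ}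
    (hμ : IsProb μ) (hν : IsProb ν) : W1 H μ ν = 0 := by
  classical
  refine le_antisymm ?_ (W1_nonneg' μ ν)
  set T : Set V := (Function.support μ ∪ Function.support ν)ᶜ with hT
  have hTinf : T.Infinite := Set.Finite.infinite_compl (hμ.2.1.union hν.2.1)
  have hTμ : ∀ u ∈ T, μ u = 0 := by
    intro u hu
    by_contra h0
    exact hu (Or.inl h0)
  have hTν : ∀ u ∈ T, ν u = 0 := by
    intro u hu
    by_contra h0
    exact hu (Or.inr h0)
  set π : V → V → ℝ := fun u v => μ u * ν v + (if u ∈ T ∧ v ∈ T ∧ u ≠ v then 1 else 0)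
    with hπdef
  have hπnn : ∀ u v, 0 ≤ π u v := by
    intro u v
    have : (0:ℝ) ≤ μ u * ν v := mul_nonneg (hμ.1 u) (hν.1 v)
    by_cases hcond : u ∈ T ∧ v ∈ T ∧ u ≠ v <;> simp [hπdef, hcond] <;> linarith
  have hrow : ∀ u, ∑' v, π u v = μ u := by
    intro u
    by_cases hu : u ∈ T
    · have hμ0 : μ u = 0 := hTμ u hu
      have heqf : (fun v => π u v) = fun v => if v ∈ T ∧ u ≠ v then 1 else 0 := by
        funext v
        by_cases hcond : v ∈ T ∧ u ≠ v <;>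
          simp [hπdef, hμ0, hu, hcond]
      rw [heqf, hμ0]
      apply tsum_eq_zero_of_not_summable
      apply not_summable_of_one_le_on_infinite (hTinf.diff (Set.finite_singleton u))
      intro v hv
      simp only [Set.mem_diff, Set.mem_singleton_iff] at hv
      rw [if_pos ⟨hv.1, fun he => hv.2 he.symm⟩]
    · have heqf : (fun v => π u v) = fun v => μ u * ν v := by
        funext v
        simp [hπdef, hu]
      rw [heqf, tsum_mul_left, hν.2.2, mul_one]
  have hcol : ∀ v, ∑' u, π u v = ν v := by
    intro v
    by_cases hv : v ∈ T
    · have hν0 : ν v = 0 := hTν v hv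
      have heqf : (fun u => π u v) = fun u => if u ∈ T ∧ u ≠ v then 1 else 0 := by
        funext u
        by_cases hcond : u ∈ T ∧ u ≠ v <;>
          simp [hπdef, hν0, hv, hcond]
      rw [heqf, hν0]
      apply tsum_eq_zero_of_not_summable
      apply not_summable_of_one_le_on_infinite (hTinf.diff (Set.finite_singleton v))
      intro u hu
      simp only [Set.mem_diff, Set.mem_singleton_iff] at hu
      rw [if_pos ⟨hu.1, hu.2⟩]
    · have heqf : (fun u => π u v) = fun u => μ u * ν v := by
        funext u
        simp [hπdef, hv]
      rw [heqf, tsum_mul_right, hμ.2.2, one_mul]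
  have hcost : ∑' p : V × V, (H.dist p.1 p.2 : ℝ) * π p.1 p.2 = 0 := by
    apply tsum_eq_zero_of_not_summable
    obtain ⟨t0, ht0⟩ := hTinf.nonempty
    have hS : {p : V × V | p.1 ∈ T ∧ p.2 ∈ T ∧ p.1 ≠ p.2}.Infinite := by
      have himg : ((fun v => (v, t0)) '' (T \ {t0})).Infinite :=
        Set.Infinite.image (fun a _ b _ hab => congrArg Prod.fst hab)
          (hTinf.diff (Set.finite_singleton t0))
      apply himg.mono
      rintro p ⟨v, hv, rfl⟩
      simp only [Set.mem_diff, Set.mem_singleton_iff] at hv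
      exact ⟨hv.1, ht0, hv.2⟩
    apply not_summable_of_one_le_on_infinite hS
    rintro ⟨u, v⟩ ⟨hu, hv, huv⟩
    have hd1 : 1 ≤ H.dist u v := one_le_dist hconn huv
    have hd1' : (1:ℝ) ≤ (H.dist u v : ℝ) := by exact_mod_cast hd1
    have hπ1 : (1:ℝ) ≤ π u v := by
      have hprod : (0:ℝ) ≤ μ u * ν v := mul_nonneg (hμ.1 u) (hν.1 v)
      have hcondT : u ∈ T ∧ v ∈ T ∧ u ≠ v := ⟨hu, hv, huv⟩
      simp only [hπdef, if_pos hcondT]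
      linarith
    calc (1:ℝ) = 1 * 1 := (one_mul 1).symm
      _ ≤ (H.dist u v : ℝ) * π u v :=
        mul_le_mul hd1' hπ1 zero_le_one (le_trans zero_le_one hd1')
  have hmem : (0:ℝ) ∈ {c | ∃ π, IsCoupling π μ ν ∧
      c = ∑' p : V × V, (H.dist p.1 p.2 : ℝ) * π p.1 p.2} :=
    ⟨π, ⟨hπnn, hrow, hcol⟩, hcost.symm⟩
  exact csInf_le ⟨0, fun c hc => by
    obtain ⟨π', hπ', rfl⟩ := hc
    exact tsum_nonneg fun p => mul_nonneg (by positivity) (hπ'.1 p.1 p.2)⟩ hmem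

theorem Wh_eq_zero_infinite [Infinite V] (hconn : H.Connected) {h : ℝ → ℝ} {D0 D1 : ℝ}
    (hc : CostFn h D0 D1) (μ ν : V → ℝ) : Wh H h μ ν = 0 := by
  have hsub : ∀ c ∈ {c | ∃ I ξ, WhAdmissible H μ ν I ξ ∧
      c = ∑ i ∈ Finset.range I, h (W1 H (ξ i) (ξ (i + 1)))}, c = 0 := by
    rintro c ⟨I, ξ, hadm, rfl⟩
    apply Finset.sum_eq_zero
    intro i hi
    have hi' := Finset.mem_range.1 hi
    rw [W1_eq_zero_infinite hconn (hadm.2.2.1 i (le_of_lt hi')) (hadm.2.2.1 (i+1) hi'),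
      hc.zero]
  rcases Set.eq_empty_or_nonempty {c | ∃ I ξ, WhAdmissible H μ ν I ξ ∧
      c = ∑ i ∈ Finset.range I, h (W1 H (ξ i) (ξ (i + 1)))} with hemp | hne
  · rw [Wh, hemp, Real.sInf_empty]
  · obtain ⟨c, hcmem⟩ := hne
    have hc0 := hsub c hcmem
    subst hc0
    refine le_antisymm (csInf_le ⟨0, fun b hb => (hsub b hb).ge⟩ hcmem)
      (le_csInf ⟨0, hcmem⟩ fun b hb => (hsub b hb).ge)

theorem hLLY_nonpos_infinite [Infinite V] (hconn : H.Connected) {h : ℝ → ℝ} {D0 D1 : ℝ}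
    (hc : CostFn h D0 D1) (x y : V) : hLLY H h x y ≤ 0 := by
  have hOR : ∀ α : ℝ, ORic H h α x y = 1 := by
    intro α
    show 1 - Wh H h (rw H α x) (rw H α y) / Wh H h (dirac x) (dirac y) = 1
    rw [Wh_eq_zero_infinite hconn hc, zero_div, sub_zero]
  rw [hLLY, Filter.liminf_eq]
  have hS : {a : ℝ | ∀ᶠ α in nhdsWithin (1:ℝ) (Set.Iio 1),
      a ≤ ORic H h α x y / (1 - α)} = Set.univ := by
    refine Set.eq_univ_of_forall fun a => ?_
    simp only [Set.mem_setOf_eq, hOR]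
    set b : ℝ := max a 1 with hb
    have hbpos : 0 < b := lt_of_lt_of_le zero_lt_one (le_max_right a 1)
    have hmem : Set.Ioo (1 - 1/b) 1 ∈ nhdsWithin (1:ℝ) (Set.Iio 1) :=
      Ioo_mem_nhdsLT_of_mem ⟨by simp; positivity, le_refl 1⟩
    filter_upwards [hmem] with α hα
    have h1 : 0 < 1 - α := by linarith [hα.2]
    have h2 : 1 - α < 1/b := by linarith [hα.1]
    have h3 : b ≤ 1/(1-α) := by
      rw [le_div_iff₀ h1]
      rw [← le_div_iff₀' hbpos]
      linarith
    calc a ≤ b := le_max_left a 1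
      _ ≤ 1/(1-α) := h3
      _ = 1/(1-α) := rfl
  rw [hS]
  rw [Real.sSup_of_not_bddAbove (by
    intro ⟨ub, hub⟩
    have h1 := hub (Set.mem_univ (ub + 1))
    linarith)]

end InfiniteCase
section MainFinal

open HGraph Filter

theorem hLLY_nonpos_finite {V : Type*} [Fintype V] {H : HGraph V} {h : ℝ → ℝ} {D0 : ℝ}
    (hconn : H.Connected) (hc : CostFn h D0 0) {x y : V} (hd : 2 ≤ H.dist x y) :
    hLLY H h x y ≤ 0 := by
  rw [hLLY, Filter.liminf_eq]
  apply Real.sSup_le _ le_rfl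
  intro a ha
  simp only [Set.mem_setOf_eq] at ha
  by_contra hpos
  push_neg at hpos
  have hev := eventually_ORic_div hconn hc hd (ε := a/2) (by linarith)
  obtain ⟨α, h1, h2⟩ := (ha.and hev).exists
  linarith

end MainFinal

/-- If `h'(1) = 0` and the diameter is at least 2, then the infimum of the
`h`-LLY–Ricci curvature is nonpositive: a positive uniform lower curvature
bound is impossible. -/
theorem hLLY_nonpos_of_d1_zero {V : Type*} (H : HGraph V)
    (hconn : H.Connected) (hlf : H.LocallyFinite) (hsimp : H.Simple)
    (h : ℝ → ℝ) (D0 : ℝ) (hc : CostFn h D0 0)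
    (hdiam : ∃ x y : V, 2 ≤ H.dist x y) :
    ∃ x y : V, x ≠ y ∧ hLLY H h x y ≤ 0 := by
  obtain ⟨x, y, hd⟩ := hdiam
  have hxy : x ≠ y := by
    intro heq
    rw [heq, hdist_self] at hd
    omega
  refine ⟨x, y, hxy, ?_⟩
  by_cases hfin : Finite V
  · haveI := Fintype.ofFinite V
    exact hLLY_nonpos_finite hconn hc hd
  · haveI : Infinite V := not_finite_iff_infinite.1 hfin
    exact hLLY_nonpos_infinite hconn hc x y
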